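/- Let Λ₃ ⊂ Λ₂ ⊂ Λ₁ be nested full-rank lattices in ℝⁿ, let R(Λ₃) be a fundamental region of Λ₃ and F a fundamental region of Λ₂ with quantizer Q_F : ℝⁿ → Λ₂ (the unique map with x − Q_F(x) ∈ F), and define the key map f : Λ₁ ∩ R(Λ₃) → Λ₂ ∩ R(Λ₃) by f(x) = [Q_F(x)] mod R(Λ₃). Then for every probability mass function p on the finite set Λ₁ ∩ R(Λ₃), the induced key distribution p_K(k) = Σ_{x ∈ Λ₁∩R(Λ₃) : f(x)=k} p(x) satisfies Σ_{k ∈ Λ₂∩R(Λ₃)} | p_K(k) − V(Λ₂)/V(Λ₃) | ≤ Σ_{x ∈ Λ₁∩R(Λ₃)} | p(x) − V(Λ₁)/V(Λ₃) |; that is, the total variational distance of the key from the uniform distribution on Λ₂/Λ₃ is at most the total variational distance of p from the uniform distribution on Λ₁/Λ₃. -/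

import Mathlib

open scoped Classical

open MeasureTheory Filter

noncomputable section

/-- The centered Gaussian density `f_σ` on `ℝⁿ`. -/
def gaussF (n : ℕ) (σ : ℝ) (x : EuclideanSpace ℝ (Fin n)) : ℝ :=
  (2 * Real.pi * σ ^ 2) ^ (-(n : ℝ) / 2) * Real.exp (-‖x‖ ^ 2 / (2 * σ ^ 2))

/-- The `Λ`-periodic Gaussian density `f_{σ,Λ}(x) = Σ_{λ∈Λ} f_σ(x+λ)`. -/
def latF (n : ℕ) (σ : ℝ) (L : Set (EuclideanSpace ℝ (Fin n)))
    (x : EuclideanSpace ℝ (Fin n)) : ℝ :=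
  ∑' l : L, gaussF n σ (x + (l : EuclideanSpace ℝ (Fin n)))

/-- `L` is the full-rank lattice generated by the invertible matrix `B`
(so its covolume is `|B.det|`). -/
def IsLattice (n : ℕ) (L : Set (EuclideanSpace ℝ (Fin n)))
    (B : Matrix (Fin n) (Fin n) ℝ) : Prop :=
  IsUnit B.det ∧
    L = {x : EuclideanSpace ℝ (Fin n) |
          ∃ z : Fin n → ℤ, ∀ i, x i = B.mulVec (fun j => (z j : ℝ)) i}

/-- `R` is a fundamental region of the lattice `L`: measurable, with pairwise
disjoint translates `R + λ` covering `ℝⁿ`. -/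
def IsFundamental (n : ℕ) (L R : Set (EuclideanSpace ℝ (Fin n))) : Prop :=
  MeasurableSet R ∧
    (L.Pairwise fun l₁ l₂ => Disjoint ((· + l₁) '' R) ((· + l₂) '' R)) ∧
    (⋃ l ∈ L, (· + l) '' R) = Set.univ

open scoped ENNReal

variable {n : ℕ}

lemma isLattice_span {L : Set (EuclideanSpace ℝ (Fin n))} {B : Matrix (Fin n) (Fin n) ℝ}
    (h : IsLattice n L B) :
    ∃ b : Module.Basis (Fin n) ℝ (EuclideanSpace ℝ (Fin n)),
      (∀ i j, b j i = B i j) ∧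
      L = (Submodule.span ℤ (Set.range b) : Set (EuclideanSpace ℝ (Fin n))) := by
  haveI := B.invertibleOfIsUnitDet h.1
  let e : (Fin n → ℝ) ≃ₗ[ℝ] EuclideanSpace ℝ (Fin n) :=
    (WithLp.linearEquiv 2 ℝ (Fin n → ℝ)).symm
  let b : Module.Basis (Fin n) ℝ (EuclideanSpace ℝ (Fin n)) :=
    (Pi.basisFun ℝ (Fin n)).map ((B.toLinearEquiv' ‹_›).trans e)
  have hb : ∀ i j, b j i = B i j := by
    intro i j
    show (e (B.toLinearEquiv' ‹_› ((Pi.basisFun ℝ (Fin n)) j))) i = B i j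
    simp [e, Matrix.toLinearEquiv', Matrix.mulVec_single, WithLp.linearEquiv,
      Matrix.toLin'_apply]
  refine ⟨b, hb, ?_⟩
  have key : ∀ (z : Fin n → ℤ) (i : Fin n),
      ((∑ j, z j • b j : EuclideanSpace ℝ (Fin n)) i) = B.mulVec (fun j => (z j : ℝ)) i := by
    intro z i
    have : ∀ s : Finset (Fin n),
        ((∑ j ∈ s, z j • b j : EuclideanSpace ℝ (Fin n)) i) = ∑ j ∈ s, (z j : ℝ) * B i j := by
      intro s
      induction s using Finset.induction_on with
      | empty => simp [PiLp.zero_apply]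
      | insert _ _ hx ih =>
          rw [Finset.sum_insert hx, PiLp.add_apply, ih, Finset.sum_insert hx,
            PiLp.smul_apply, hb, zsmul_eq_mul]
    rw [this, Matrix.mulVec, dotProduct]
    exact Finset.sum_congr rfl fun j _ => mul_comm _ _
  rw [h.2]
  ext x
  simp only [Set.mem_setOf_eq, SetLike.mem_coe,
    Submodule.mem_span_range_iff_exists_fun]
  constructor
  · rintro ⟨z, hz⟩
    exact ⟨z, by ext i; rw [key]; exact (hz i).symm⟩
  · rintro ⟨z, hz⟩
    exact ⟨z, fun i => by rw [← hz, key]⟩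

lemma vol_fd_std :
    volume (ZSpan.fundamentalDomain
      ((EuclideanSpace.basisFun (Fin n) ℝ).toBasis)) = 1 := by
  have h : ZSpan.fundamentalDomain ((EuclideanSpace.basisFun (Fin n) ℝ).toBasis)
      = (MeasurableEquiv.toLp 2 (Fin n → ℝ)).symm ⁻¹'
        (Set.univ.pi fun _ : Fin n => Set.Ico (0:ℝ) 1) := by
    ext x
    simp [ZSpan.fundamentalDomain, MeasurableEquiv.coe_toLp,
      EuclideanSpace.basisFun_repr, Set.mem_pi]
  rw [h, (EuclideanSpace.volume_preserving_symm_measurableEquiv_toLp (Fin n)).measure_preimage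
    (MeasurableSet.pi Set.countable_univ fun _ _ => measurableSet_Ico).nullMeasurableSet]
  rw [volume_pi, Measure.pi_pi]
  simp [Real.volume_Ico]

lemma vol_fd (b : Module.Basis (Fin n) ℝ (EuclideanSpace ℝ (Fin n)))
    {B : Matrix (Fin n) (Fin n) ℝ} (hb : ∀ i j, b j i = B i j) :
    volume (ZSpan.fundamentalDomain b) = ENNReal.ofReal |B.det| := by
  rw [ZSpan.measure_fundamentalDomain b volume ((EuclideanSpace.basisFun (Fin n) ℝ).toBasis),
    vol_fd_std, mul_one]
  congr 2
  rw [Module.Basis.det_apply]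
  congr 1
  ext i j
  rw [Module.Basis.toMatrix_apply, OrthonormalBasis.coe_toBasis_repr_apply,
    EuclideanSpace.basisFun_repr, hb]
lemma fund_exists (hR : IsFundamental n L R) (x : EuclideanSpace ℝ (Fin n)) :
    ∃ l ∈ L, x - l ∈ R := by
  have hx : x ∈ ⋃ l ∈ L, (· + l) '' R := hR.2.2 ▸ Set.mem_univ x
  rw [Set.mem_iUnion₂] at hx
  obtain ⟨l, hl, r, hr, hrl⟩ := hx
  refine ⟨l, hl, ?_⟩
  have : r + l = x := hrl
  rw [← this, add_sub_cancel_right]; exact hr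

lemma fund_uniq (hR : IsFundamental n L R) (h0 : (0:EuclideanSpace ℝ (Fin n)) ∈ L)
    {x y : EuclideanSpace ℝ (Fin n)} (hx : x ∈ R) (hy : y ∈ R)
    (hxy : x - y ∈ L) : x = y := by
  by_contra hne
  have hne' : x - y ≠ 0 := sub_ne_zero_of_ne hne
  have hd := hR.2.1 h0 hxy (Ne.symm hne')
  have hx0 : x ∈ (· + (0:EuclideanSpace ℝ (Fin n))) '' R := ⟨x, hx, by simp⟩
  have hx1 : x ∈ (· + (x - y)) '' R := ⟨y, hy, by show y + (x - y) = x; abel⟩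
  exact Set.disjoint_left.mp hd hx0 hx1

lemma isLattice_countable {L : Set (EuclideanSpace ℝ (Fin n))}
    {B : Matrix (Fin n) (Fin n) ℝ} (h : IsLattice n L B) : L.Countable := by
  rw [h.2]
  have : {x : EuclideanSpace ℝ (Fin n) |
      ∃ z : Fin n → ℤ, ∀ i, x i = B.mulVec (fun j => (z j : ℝ)) i} =
    Set.range (fun z : Fin n → ℤ =>
      (WithLp.toLp 2 (fun i => B.mulVec (fun j => (z j : ℝ)) i) : EuclideanSpace ℝ (Fin n))) := by
    ext x
    constructor
    · rintro ⟨z, hz⟩; exact ⟨z, by ext i; exact (hz i).symm⟩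
    · rintro ⟨z, rfl⟩; exact ⟨z, fun i => rfl⟩
  rw [this]
  exact Set.countable_range _

lemma card_reps {L L' F : Set (EuclideanSpace ℝ (Fin n))}
    {B B' : Matrix (Fin n) (Fin n) ℝ}
    (hL : IsLattice n L B) (hL' : IsLattice n L' B')
    (hsub : L' ⊆ L) (hF : IsFundamental n L' F) :
    (L ∩ F).Finite ∧ ((Nat.card ↥(L ∩ F) : ℝ)) * |B.det| = |B'.det| := by
  obtain ⟨b, hb, hLs⟩ := isLattice_span hL
  obtain ⟨b', hb', hL's⟩ := isLattice_span hL'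
  set G := ZSpan.fundamentalDomain b with hGdef
  have hGmeas : MeasurableSet G := ZSpan.fundamentalDomain_measurableSet b
  set T := L ∩ F with hTdef
  have hTL : T ⊆ L := Set.inter_subset_left
  have hTcount : T.Countable := (isLattice_countable hL).mono hTL
  -- closure properties
  have hsubL : ∀ {a c : EuclideanSpace ℝ (Fin n)}, a ∈ L → c ∈ L → a - c ∈ L := by
    intro a c ha hc; rw [hLs] at ha hc ⊢; exact sub_mem ha hc
  have haddL : ∀ {a c : EuclideanSpace ℝ (Fin n)}, a ∈ L → c ∈ L → a + c ∈ L := by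
    intro a c ha hc; rw [hLs] at ha hc ⊢; exact add_mem ha hc
  have hnegL : ∀ {a : EuclideanSpace ℝ (Fin n)}, a ∈ L → -a ∈ L := by
    intro a ha; rw [hLs] at ha ⊢; exact neg_mem ha
  have hsubL' : ∀ {a c : EuclideanSpace ℝ (Fin n)}, a ∈ L' → c ∈ L' → a - c ∈ L' := by
    intro a c ha hc; rw [hL's] at ha hc ⊢; exact sub_mem ha hc
  have hnegL' : ∀ {a : EuclideanSpace ℝ (Fin n)}, a ∈ L' → -a ∈ L' := by
    intro a ha; rw [hL's] at ha ⊢; exact neg_mem ha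
  have h0L' : (0 : EuclideanSpace ℝ (Fin n)) ∈ L' := by
    rw [hL's]; exact Submodule.zero_mem _
  -- unique translate into G
  have huniq : ∀ x : EuclideanSpace ℝ (Fin n), ∃! l, l ∈ L ∧ l + x ∈ G := by
    intro x
    obtain ⟨v, hv, hvu⟩ := ZSpan.exist_unique_vadd_mem_fundamentalDomain b x
    refine ⟨(v : EuclideanSpace ℝ (Fin n)), ⟨by rw [hLs]; exact v.2, hv⟩, ?_⟩
    rintro l ⟨hl, hlG⟩
    have h1 : (⟨l, by rwa [hLs] at hl⟩ : Submodule.span ℤ (Set.range b)) = v := hvu _ hlG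
    exact congrArg Subtype.val h1
  -- coset representatives
  have hrep : ∀ l ∈ L, ∃! w, w ∈ T ∧ l - w ∈ L' := by
    intro l hl
    obtain ⟨μ', hμ', hlμ'⟩ := fund_exists hF l
    refine ⟨l - μ', ⟨⟨hsubL hl (hsub hμ'), hlμ'⟩, by simpa using hμ'⟩, ?_⟩
    rintro w ⟨⟨hwL, hwF⟩, hlw⟩
    have : w - (l - μ') ∈ L' := by
      have h2 : w - (l - μ') = μ' - (l - w) := by abel
      rw [h2]; exact hsubL' hμ' hlw
    exact fund_uniq hF h0L' hwF hlμ' this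
  set D := ⋃ w ∈ T, (· + w) '' G with hDdef
  have hDmeas : MeasurableSet D := by
    refine MeasurableSet.biUnion hTcount fun w _ => ?_
    rw [Set.image_add_right]
    exact hGmeas.preimage (measurable_add_const (-w))
  have hmemD : ∀ x : EuclideanSpace ℝ (Fin n), x ∈ D ↔ ∃ w ∈ T, x - w ∈ G := by
    intro x
    simp only [hDdef, Set.mem_iUnion₂, Set.mem_image]
    constructor
    · rintro ⟨w, hw, r, hr, hrw⟩
      refine ⟨w, hw, ?_⟩
      have : r + w = x := hrw
      rw [← this, add_sub_cancel_right]; exact hr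
    · rintro ⟨w, hw, hx⟩
      exact ⟨w, hw, x - w, hx, by show x - w + w = x; abel⟩
  -- D is a fundamental domain for span b'
  have hDfund : IsAddFundamentalDomain (Submodule.span ℤ (Set.range b')) D volume := by
    refine IsAddFundamentalDomain.mk' hDmeas.nullMeasurableSet fun x => ?_
    obtain ⟨v, ⟨hvL, hvG⟩, hvu⟩ := huniq x
    obtain ⟨w, ⟨hwT, hwL'⟩, hwu⟩ := hrep (-v) (hnegL hvL)
    have hgL' : v + w ∈ L' := by
      have : v + w = -(-v - w) := by abel
      rw [this]; exact hnegL' hwL'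
    refine ⟨⟨v + w, by rwa [hL's] at hgL'⟩, ?_, ?_⟩
    · show (v + w) + x ∈ D
      rw [hmemD]
      refine ⟨w, hwT, ?_⟩
      have : v + w + x - w = v + x := by abel
      rwa [this]
    · rintro ⟨g, hg⟩ hgx
      have hgL'' : g ∈ L' := by rw [hL's]; exact hg
      have hgx' : g + x ∈ D := hgx
      rw [hmemD] at hgx'
      obtain ⟨w', hw'T, hw'G⟩ := hgx'
      have hgw' : (g - w') + x ∈ G := by
        have : g - w' + x = g + x - w' := by abel
        rwa [this]
      have hgw'L : g - w' ∈ L := hsubL (hsub hgL'') (hTL hw'T)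
      have hveq : g - w' = v := hvu _ ⟨hgw'L, hgw'⟩
      have hw'eq : w' = w := by
        refine hwu w' ⟨hw'T, ?_⟩
        have : -v - w' = -g := by rw [← hveq]; abel
        rw [this]; exact hnegL' hgL''
      ext1
      show g = v + w
      rw [← hw'eq, ← hveq]; abel
  -- pairwise disjointness of translates
  have hdisjT : T.PairwiseDisjoint (fun w => (· + w) '' G) := by
    intro w hw w' hw' hne
    refine Set.disjoint_left.mpr fun x hx hx' => hne ?_
    obtain ⟨r, hr, hrw⟩ := hx
    obtain ⟨r', hr', hrw'⟩ := hx'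
    have h1 : x - w ∈ G := by
      have : r + w = x := hrw
      rw [← this, add_sub_cancel_right]; exact hr
    have h2 : x - w' ∈ G := by
      have : r' + w' = x := hrw'
      rw [← this, add_sub_cancel_right]; exact hr'
    have e1 : -w + x ∈ G := by rwa [neg_add_eq_sub]
    have e2 : -w' + x ∈ G := by rwa [neg_add_eq_sub]
    obtain ⟨v, hv, hvu⟩ := huniq x
    have := (hvu _ ⟨hnegL (hTL hw), e1⟩).trans (hvu _ ⟨hnegL (hTL hw'), e2⟩).symm
    exact neg_injective this
  -- volume computations
  have htrans : ∀ w : EuclideanSpace ℝ (Fin n), volume ((· + w) '' G) = volume G := by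
    intro w
    rw [Set.image_add_right]
    exact measure_preimage_add_right volume (-w) G
  have hvol1 : volume D = ∑' w : T, volume ((· + (w : EuclideanSpace ℝ (Fin n))) '' G) :=
    measure_biUnion hTcount hdisjT fun w hw => by
      rw [Set.image_add_right]; exact hGmeas.preimage (measurable_add_const _)
  have hvolG : volume G = ENNReal.ofReal |B.det| := vol_fd b hb
  have hvolD : volume D = ENNReal.ofReal |B'.det| := by
    have i1 : MeasurableVAdd (Submodule.span ℤ (Set.range b')) (EuclideanSpace ℝ (Fin n)) :=
      (inferInstance : MeasurableVAdd (Submodule.span ℤ (Set.range b')).toAddSubgroup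
        (EuclideanSpace ℝ (Fin n)))
    have i2 : VAddInvariantMeasure (Submodule.span ℤ (Set.range b'))
        (EuclideanSpace ℝ (Fin n)) volume :=
      (inferInstance : VAddInvariantMeasure (Submodule.span ℤ (Set.range b')).toAddSubgroup
        (EuclideanSpace ℝ (Fin n)) volume)
    rw [hDfund.measure_eq (ZSpan.isAddFundamentalDomain b' volume), vol_fd b' hb']
  have hdetB : (0:ℝ) < |B.det| := abs_pos.mpr hL.1.ne_zero
  have hGne : volume G ≠ 0 := by rw [hvolG]; simpa using hdetB
  have hfin : T.Finite := by
    by_contra hinf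
    haveI : Infinite ↥T := Set.infinite_coe_iff.mpr hinf
    have htop : volume D = ⊤ := by
      rw [hvol1]
      have : ∀ w : T, volume ((· + (w : EuclideanSpace ℝ (Fin n))) '' G) = volume G :=
        fun w => htrans w
      rw [tsum_congr this]
      exact ENNReal.tsum_const_eq_top_of_ne_zero hGne
    rw [hvolD] at htop
    exact ENNReal.ofReal_ne_top htop
  refine ⟨hfin, ?_⟩
  haveI : Fintype ↥T := hfin.fintype
  have hcard : volume D = (Nat.card ↥T : ℝ≥0∞) * volume G := by
    rw [hvol1, tsum_congr (fun w : T => htrans w), tsum_fintype]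
    simp [Finset.sum_const, Nat.card_eq_fintype_card, nsmul_eq_mul]
  rw [hvolD, hvolG] at hcard
  have hnn : (0:ℝ) ≤ (Nat.card ↥T : ℝ) * |B.det| := by positivity
  rw [show ((Nat.card ↥T : ℝ≥0∞)) = ENNReal.ofReal (Nat.card ↥T : ℝ) by
      simp [ENNReal.ofReal_natCast], ← ENNReal.ofReal_mul (by positivity)] at hcard
  exact (ENNReal.ofReal_eq_ofReal_iff hnn (abs_nonneg _)).mp hcard.symm

lemma isLattice_closure {L : Set (EuclideanSpace ℝ (Fin n))}
    {B : Matrix (Fin n) (Fin n) ℝ} (h : IsLattice n L B) :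
    (0:EuclideanSpace ℝ (Fin n)) ∈ L ∧
      (∀ {a c : EuclideanSpace ℝ (Fin n)}, a ∈ L → c ∈ L → a + c ∈ L) ∧
      (∀ {a c : EuclideanSpace ℝ (Fin n)}, a ∈ L → c ∈ L → a - c ∈ L) := by
  obtain ⟨b, -, hLs⟩ := isLattice_span h
  refine ⟨by rw [hLs]; exact Submodule.zero_mem _, ?_, ?_⟩
  · intro a c ha hc; rw [hLs] at ha hc ⊢; exact add_mem ha hc
  · intro a c ha hc; rw [hLs] at ha hc ⊢; exact sub_mem ha hc

/-- the total variational distance of the key from uniform is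
at most the total variational distance of the quantized variable from uniform. -/
theorem stmt_19 (n : ℕ) (L₁ L₂ L₃ : Set (EuclideanSpace ℝ (Fin n)))
    (B₁ B₂ B₃ : Matrix (Fin n) (Fin n) ℝ)
    (h₁ : IsLattice n L₁ B₁) (h₂ : IsLattice n L₂ B₂) (h₃ : IsLattice n L₃ B₃)
    (h₃₂ : L₃ ⊆ L₂) (h₂₁ : L₂ ⊆ L₁)
    (R₃ : Set (EuclideanSpace ℝ (Fin n))) (hR₃ : IsFundamental n L₃ R₃)
    (F : Set (EuclideanSpace ℝ (Fin n))) (hF : IsFundamental n L₂ F)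
    (Q : EuclideanSpace ℝ (Fin n) → EuclideanSpace ℝ (Fin n))
    (hQ : ∀ x, Q x ∈ L₂ ∧ x - Q x ∈ F)
    (m : EuclideanSpace ℝ (Fin n) → EuclideanSpace ℝ (Fin n))
    (hm : ∀ y, m y ∈ R₃ ∧ m y - y ∈ L₃)
    (p : EuclideanSpace ℝ (Fin n) → ℝ) (hp : ∀ x, 0 ≤ p x)
    (hsupp : ∀ x, x ∉ L₁ ∩ R₃ → p x = 0)
    (hsum : ∑' x : ↥(L₁ ∩ R₃), p x = 1)
    (pK : EuclideanSpace ℝ (Fin n) → ℝ)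
    (hpK : ∀ k, pK k =
      ∑' x : ↥(L₁ ∩ R₃),
        if m (Q (x : EuclideanSpace ℝ (Fin n))) = k then p x else 0) :
    (∑' k : ↥(L₂ ∩ R₃),
        abs (pK (k : EuclideanSpace ℝ (Fin n)) - |B₂.det| / |B₃.det|)) ≤
      ∑' x : ↥(L₁ ∩ R₃),
        abs (p (x : EuclideanSpace ℝ (Fin n)) - |B₁.det| / |B₃.det|) := by

  classical
  obtain ⟨h0₂, hadd₂, hsub₂⟩ := isLattice_closure h₂
  obtain ⟨h0₃, hadd₃, hsub₃⟩ := isLattice_closure h₃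
  obtain ⟨h0₁, hadd₁, hsub₁⟩ := isLattice_closure h₁
  obtain ⟨hXfin, -⟩ := card_reps h₁ h₃ (h₃₂.trans h₂₁) hR₃
  obtain ⟨hKfin, -⟩ := card_reps h₂ h₃ h₃₂ hR₃
  obtain ⟨hWfin, hW⟩ := card_reps h₁ h₂ h₂₁ hF
  haveI : Fintype ↥(L₁ ∩ R₃) := hXfin.fintype
  haveI : Fintype ↥(L₂ ∩ R₃) := hKfin.fintype
  -- helper characterizations
  have hmchar : ∀ y y' : EuclideanSpace ℝ (Fin n), y' ∈ R₃ → y' - y ∈ L₃ → m y = y' := by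
    intro y y' hy' hyy'
    refine fund_uniq hR₃ h0₃ (hm y).1 hy' ?_
    have : m y - y' = (m y - y) - (y' - y) := by abel
    rw [this]; exact hsub₃ (hm y).2 hyy'
  have hQchar : ∀ x q : EuclideanSpace ℝ (Fin n), q ∈ L₂ → x - q ∈ F → Q x = q := by
    intro x q hq hxq
    have h1 : (x - Q x) - (x - q) ∈ L₂ := by
      have : (x - Q x) - (x - q) = q - Q x := by abel
      rw [this]; exact hsub₂ hq (hQ x).1
    have h2 : x - Q x = x - q := fund_uniq hF h0₂ (hQ x).2 hxq h1
    exact sub_right_injective h2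
  -- the key map
  have hκmem : ∀ x : ↥(L₁ ∩ R₃), m (Q (x:EuclideanSpace ℝ (Fin n))) ∈ L₂ ∩ R₃ := by
    intro x
    refine ⟨?_, (hm _).1⟩
    have h1 : m (Q ↑x) - Q ↑x ∈ L₂ := h₃₂ (hm _).2
    have : m (Q ↑x) = (m (Q ↑x) - Q ↑x) + Q ↑x := by abel
    rw [this]; exact hadd₂ h1 (hQ ↑x).1
  set κ : ↥(L₁ ∩ R₃) → ↥(L₂ ∩ R₃) := fun x => ⟨m (Q ↑x), hκmem x⟩ with hκdef
  set V₁ := |B₁.det| with hV₁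
  set V₂ := |B₂.det| with hV₂
  set V₃ := |B₃.det| with hV₃
  have hV₃pos : (0:ℝ) < V₃ := abs_pos.mpr h₃.1.ne_zero
  -- pK as finite sum over the fiber
  have hpK' : ∀ k : ↥(L₂ ∩ R₃),
      pK ↑k = ∑ x ∈ Finset.univ.filter (fun x => κ x = k), p ↑x := by
    intro k
    rw [hpK ↑k, tsum_fintype, Finset.sum_filter]
    refine Finset.sum_congr rfl fun x _ => ?_
    congr 1
    simp [hκdef, Subtype.ext_iff]
  -- the fiber cardinality
  have hfiber : ∀ k : ↥(L₂ ∩ R₃),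
      (Finset.univ.filter (fun x => κ x = k)).card = Nat.card ↥(L₁ ∩ F) := by
    intro k
    haveI : Fintype ↥(L₁ ∩ F) := hWfin.fintype
    have hjmem : ∀ w : ↥(L₁ ∩ F), m ((w:EuclideanSpace ℝ (Fin n)) + ↑k) ∈ L₁ ∩ R₃ := by
      intro w
      refine ⟨?_, (hm _).1⟩
      have hb1 : m (↑w + ↑k) - (↑w + ↑k) ∈ L₁ := (h₃₂.trans h₂₁) (hm _).2
      have hb2 : (↑w + ↑k : EuclideanSpace ℝ (Fin n)) ∈ L₁ := hadd₁ w.2.1 (h₂₁ k.2.1)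
      have hb3 : m (↑w + ↑k) = (m (↑w + ↑k) - (↑w + ↑k)) + (↑w + ↑k) := by abel
      rw [hb3]; exact hadd₁ hb1 hb2
    have himem : ∀ x : ↥(L₁ ∩ R₃), (x:EuclideanSpace ℝ (Fin n)) - Q ↑x ∈ L₁ ∩ F :=
      fun x => ⟨hsub₁ x.2.1 (h₂₁ (hQ ↑x).1), (hQ ↑x).2⟩
    have hQm : ∀ w : ↥(L₁ ∩ F),
        Q (m ((w:EuclideanSpace ℝ (Fin n)) + ↑k))
          = ↑k + (m (↑w + ↑k) - (↑w + ↑k)) := by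
      intro w
      have hlam : m ((w:EuclideanSpace ℝ (Fin n)) + ↑k) - (↑w + ↑k) ∈ L₃ := (hm _).2
      refine hQchar _ _ (hadd₂ k.2.1 (h₃₂ hlam)) ?_
      have he : m ((w:EuclideanSpace ℝ (Fin n)) + ↑k)
          - (↑k + (m (↑w + ↑k) - (↑w + ↑k))) = ↑w := by abel
      rw [he]; exact w.2.2
    have hneg3 : ∀ {a : EuclideanSpace ℝ (Fin n)}, a ∈ L₃ → -a ∈ L₃ := by
      intro a ha
      have : -a = (0:EuclideanSpace ℝ (Fin n)) - a := by abel
      rw [this]; exact hsub₃ h0₃ ha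
    rw [Nat.card_eq_fintype_card, ← Finset.card_univ]
    refine Finset.card_bij'
      (fun x _ => (⟨(x:EuclideanSpace ℝ (Fin n)) - Q ↑x, himem x⟩ : ↥(L₁ ∩ F)))
      (fun w _ => (⟨m ((w:EuclideanSpace ℝ (Fin n)) + ↑k), hjmem w⟩ : ↥(L₁ ∩ R₃)))
      (fun x _ => Finset.mem_univ _) ?_ ?_ ?_
    · -- j maps into the fiber
      intro w _
      simp only [Finset.mem_filter, Finset.mem_univ, true_and, hκdef]
      refine Subtype.ext ?_
      show m (Q (m ((w:EuclideanSpace ℝ (Fin n)) + ↑k))) = ↑k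
      rw [hQm w]
      refine hmchar _ _ k.2.2 ?_
      have hlam : m ((w:EuclideanSpace ℝ (Fin n)) + ↑k) - (↑w + ↑k) ∈ L₃ := (hm _).2
      have he : (↑k : EuclideanSpace ℝ (Fin n))
          - (↑k + (m (↑w + ↑k) - (↑w + ↑k))) = -(m (↑w + ↑k) - (↑w + ↑k)) := by abel
      rw [he]; exact hneg3 hlam
    · -- left inverse : j (i x) = x
      intro x hx
      simp only [Finset.mem_filter, Finset.mem_univ, true_and, hκdef] at hx
      refine Subtype.ext ?_
      show m (((x:EuclideanSpace ℝ (Fin n)) - Q ↑x) + ↑k) = ↑x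
      refine hmchar _ _ x.2.2 ?_
      have hk : m (Q (x:EuclideanSpace ℝ (Fin n))) = ↑k := congrArg Subtype.val hx
      have h1 : (↑x : EuclideanSpace ℝ (Fin n)) - ((↑x - Q ↑x) + ↑k) = Q ↑x - ↑k := by abel
      rw [h1, ← hk]
      have h2 : Q (x:EuclideanSpace ℝ (Fin n)) - m (Q ↑x) = -(m (Q ↑x) - Q ↑x) := by abel
      rw [h2]; exact hneg3 (hm _).2
    · -- right inverse : i (j w) = w
      intro w _
      refine Subtype.ext ?_
      show m ((w:EuclideanSpace ℝ (Fin n)) + ↑k) - Q (m (↑w + ↑k)) = ↑w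
      rw [hQm w]
      abel
  -- arithmetic on fibers
  have hconst : ∀ k : ↥(L₂ ∩ R₃),
      ∑ x ∈ Finset.univ.filter (fun x => κ x = k), (V₁ / V₃) = V₂ / V₃ := by
    intro k
    rw [Finset.sum_const, hfiber k, nsmul_eq_mul]
    rw [← hW]
    field_simp
  rw [tsum_fintype, tsum_fintype]
  calc ∑ k : ↥(L₂ ∩ R₃), |pK ↑k - V₂ / V₃|
      ≤ ∑ k : ↥(L₂ ∩ R₃), ∑ x ∈ Finset.univ.filter (fun x => κ x = k),
          |p ↑x - V₁ / V₃| := by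
        refine Finset.sum_le_sum fun k _ => ?_
        rw [hpK' k, ← hconst k, ← Finset.sum_sub_distrib]
        exact Finset.abs_sum_le_sum_abs _ _
    _ = ∑ x : ↥(L₁ ∩ R₃), |p ↑x - V₁ / V₃| := by
        exact Finset.sum_fiberwise _ _ _
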